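/- Let Γ be a subgroup of Upp_d(ℂ), the group of invertible upper-triangular d×d complex matrices. If Γ is not virtually nilpotent, then there is a group homomorphism ρ : Γ → Aff(ℂ) whose image ρ(Γ) is not virtually nilpotent. -/

import Mathlib

/-- A group is virtually nilpotent if it has a nilpotent subgroup of finite index. -/
def IsVirtuallyNilpotent (G : Type*) [Group G] : Prop :=
  ∃ H : Subgroup G, Group.IsNilpotent H ∧ H.FiniteIndex

namespace Stmt18

open scoped commutatorElement

abbrev Aff : Type := ℂ ≃ᵃ[ℂ] ℂ

/-- slope of an affine automorphism -/
noncomputable def sl (e : Aff) : ℂ := e 1 - e 0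

lemma linear_apply (e : Aff) (x : ℂ) : e x = e.linear x + e 0 := by
  have := e.map_vadd (0 : ℂ) x
  simpa [vadd_eq_add] using this

lemma apply_eq (e : Aff) (x : ℂ) : e x = sl e * x + e 0 := by
  have h1 : e x = e.linear x + e 0 := linear_apply e x
  have h2 : e 1 = e.linear 1 + e 0 := linear_apply e 1
  have h3 : e.linear x = x * e.linear 1 := by
    have := e.linear.map_smul x (1 : ℂ)
    simpa [smul_eq_mul] using this
  rw [h1, h3, sl, h2]; ring

lemma mul_apply (e f : Aff) (x : ℂ) : (e * f) x = e (f x) := rfl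

lemma one_apply (x : ℂ) : (1 : Aff) x = x := rfl

lemma aff_ext {e f : Aff} (h : ∀ x, e x = f x) : e = f := by
  ext x; exact h x

lemma sl_mul (e f : Aff) : sl (e * f) = sl e * sl f := by
  have h1 : (e * f) 1 = sl e * f 1 + e 0 := by rw [mul_apply, apply_eq]
  have h0 : (e * f) 0 = sl e * f 0 + e 0 := by rw [mul_apply, apply_eq]
  simp only [sl, h1, h0]; ring

lemma sl_one : sl (1 : Aff) = 1 := by simp [sl]

lemma sl_ne_zero (e : Aff) : sl e ≠ 0 := by
  intro h
  have : e 1 = e 0 := by have := sub_eq_zero.mp h; exact this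
  have := e.injective this
  norm_num at this

lemma sl_inv (e : Aff) : sl e⁻¹ = (sl e)⁻¹ := by
  have h : sl e⁻¹ * sl e = 1 := by
    rw [← sl_mul, inv_mul_cancel, sl_one]
  exact eq_inv_of_mul_eq_one_left h

lemma eq_one_of_sl_one_of_zero (e : Aff) (h1 : sl e = 1) (h0 : e 0 = 0) : e = 1 := by
  apply aff_ext; intro x; rw [apply_eq, h1, h0, one_apply]; ring

lemma comm_sl (p q : Aff) (hq : sl q = 1) : sl ⁅p, q⁆ = 1 := by
  rw [commutatorElement_def, sl_mul, sl_mul, sl_mul, hq, sl_inv, sl_inv, hq]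
  have := sl_ne_zero p
  field_simp

lemma inv_apply_eq (p : Aff) (y : ℂ) : p⁻¹ y = (y - p 0) / sl p := by
  have : p (p⁻¹ y) = y := by
    have := mul_apply p p⁻¹ y
    rw [mul_inv_cancel] at this
    simpa [one_apply] using this.symm
  rw [apply_eq] at this
  rw [eq_div_iff (sl_ne_zero p)]
  linear_combination this

lemma comm_zero (p q : Aff) (hq : sl q = 1) : ⁅p, q⁆ 0 = (sl p - 1) * q 0 := by
  have e1 : q⁻¹ (0:ℂ) = -(q 0) := by rw [inv_apply_eq, hq]; ring
  have e2 : ⁅p,q⁆ (0:ℂ) = p (q (p⁻¹ (q⁻¹ 0))) := by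
    rw [commutatorElement_def, mul_apply, mul_apply, mul_apply]
  rw [e2, e1, inv_apply_eq]
  rw [apply_eq q, apply_eq p, hq]
  have := sl_ne_zero p
  field_simp
  ring


lemma sl_pow (e : Aff) (n : ℕ) : sl (e ^ n) = sl e ^ n := by
  induction n with
  | zero => simpa using sl_one
  | succ k ih => rw [pow_succ, sl_mul, ih, pow_succ]

lemma pow_zero_eval (e : Aff) (h : sl e = 1) (n : ℕ) : (e ^ n) 0 = n * e 0 := by
  induction n with
  | zero => simp [one_apply]
  | succ k ih =>
    rw [pow_succ, mul_apply, apply_eq (e ^ k), sl_pow, h, one_pow, ih]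
    push_cast; ring

lemma exists_pow_mem {G : Type*} [Group G] (N : Subgroup G) [N.FiniteIndex] (g : G) :
    ∃ m, 0 < m ∧ g ^ m ∈ N := by
  haveI : Finite (G ⧸ N) := N.finite_quotient_of_finiteIndex
  obtain ⟨i, j, hij, hfij⟩ := Finite.exists_ne_map_eq_of_infinite
    (fun n : ℕ => (QuotientGroup.mk (g ^ n) : G ⧸ N))
  rcases Nat.lt_or_ge i j with hlt | hge
  · refine ⟨j - i, by omega, ?_⟩
    have h2 := QuotientGroup.eq.mp hfij
    have hj : g ^ j = g ^ i * g ^ (j - i) := by rw [← pow_add]; congr 1; omega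
    rw [hj] at h2; simpa using h2
  · have hlt : j < i := by omega
    refine ⟨i - j, by omega, ?_⟩
    have h2 := QuotientGroup.eq.mp hfij.symm
    have hj : g ^ i = g ^ j * g ^ (i - j) := by rw [← pow_add]; congr 1; omega
    rw [hj] at h2; simpa using h2

section FixedPoint

variable (H : Subgroup Aff)

lemma no_translation (hVN : IsVirtuallyNilpotent H)
    (hinf : {x : ℂ | ∃ h ∈ H, sl h = x}.Infinite) :
    ∀ h ∈ H, sl h = 1 → h = 1 := by
  obtain ⟨N, hNnil, hNfi⟩ := hVN
  haveI := hNfi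
  intro τ hτ hslτ
  by_contra hne
  have ht : τ 0 ≠ 0 := fun h0 => hne (eq_one_of_sl_one_of_zero τ hslτ h0)
  -- some element of N has slope ≠ 1
  have hslN : ∃ a : N, sl ((a : H) : Aff) ≠ 1 := by
    by_contra hall
    push_neg at hall
    haveI : Finite (H ⧸ N) := N.finite_quotient_of_finiteIndex
    apply hinf
    have hsub : {x : ℂ | ∃ h ∈ H, sl h = x} ⊆
        Set.range (fun q : H ⧸ N => sl ((Quotient.out q : H) : Aff)) := by
      rintro x ⟨h, hh, rfl⟩
      set hh' : H := ⟨h, hh⟩ with hhh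
      set q : H ⧸ N := QuotientGroup.mk hh' with hq
      refine ⟨q, ?_⟩
      have hout : (Quotient.out q)⁻¹ * hh' ∈ N := by
        rw [← QuotientGroup.eq]
        simp [hq, QuotientGroup.out_eq']
      have hkey : (Quotient.out q) * ((Quotient.out q)⁻¹ * hh') = hh' :=
        mul_inv_cancel_left _ _
      have : sl ((hh' : H) : Aff) =
          sl ((Quotient.out q : H) : Aff) * sl (((Quotient.out q)⁻¹ * hh' : H) : Aff) := by
        rw [← sl_mul]; congr 1
        rw [← Subgroup.coe_mul, hkey]
      rw [hall ⟨_, hout⟩, mul_one] at this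
      exact this.symm
    exact Set.Finite.subset (Set.finite_range _) hsub
  obtain ⟨a, ha⟩ := hslN
  obtain ⟨m, hm, hmem⟩ := exists_pow_mem N (⟨τ, hτ⟩ : H)
  set b : N := ⟨_, hmem⟩ with hb
  have hbcoe : ((b : H) : Aff) = τ ^ m := by
    simp [hb]
  have hbsl : sl ((b : H) : Aff) = 1 := by
    rw [hbcoe, sl_pow, hslτ, one_pow]
  have hbz : ((b : H) : Aff) 0 = m * τ 0 := by
    rw [hbcoe, pow_zero_eval τ hslτ]
  have hbz' : ((b : H) : Aff) 0 ≠ 0 := by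
    rw [hbz]
    exact mul_ne_zero (Nat.cast_ne_zero.mpr (by omega)) ht
  -- commutator chain
  set c : ℂ := sl ((a : H) : Aff) with hc
  let f : ℕ → N := fun n => Nat.rec b (fun _ y => ⁅a, y⁆) n
  have hf0 : f 0 = b := rfl
  have hfs : ∀ n, f (n + 1) = ⁅a, f n⁆ := fun n => rfl
  let jN : N → Aff := fun y => ((y : H) : Aff)
  have coe_comm : ∀ y : N, jN ⁅a, y⁆ = ⁅jN a, jN y⁆ := by
    intro y
    simp [jN, commutatorElement_def]
  have hprop : ∀ n, sl (jN (f n)) = 1 ∧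
      (jN (f n)) 0 = (c - 1) ^ n * (jN b) 0 := by
    intro n
    induction n with
    | zero => exact ⟨hbsl, by rw [hf0, pow_zero, one_mul]⟩
    | succ k ih =>
      rw [hfs, coe_comm]
      constructor
      · exact comm_sl _ _ ih.1
      · rw [comm_zero _ _ ih.1, ih.2, pow_succ]; ring
  have hmemlcs : ∀ n, f n ∈ (⊤ : Subgroup N).lowerCentralSeries n := by
    intro n
    induction n with
    | zero => simp
    | succ k ih =>
      rw [hfs, lowerCentralSeries_succ]
      have h1 : ⁅f k, a⁆ ∈ ⁅(⊤ : Subgroup N).lowerCentralSeries k, (⊤ : Subgroup N)⁆ :=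
        Subgroup.commutator_mem_commutator ih (Subgroup.mem_top a)
      have h2 : (⁅a, f k⁆ : N) = ⁅f k, a⁆⁻¹ := by
        rw [commutatorElement_inv]
      rw [h2]
      exact inv_mem h1
  obtain ⟨n, hn⟩ := nilpotent_iff_lowerCentralSeries.mp hNnil
  have : f n = 1 := by
    have := hmemlcs n
    rw [hn] at this
    simpa using this
  have hz := (hprop n).2
  rw [this] at hz
  simp only [jN, OneMemClass.coe_one, one_apply] at hz
  have : (c - 1) ^ n * (((b : H)) : Aff) 0 ≠ 0 :=
    mul_ne_zero (pow_ne_zero _ (sub_ne_zero.mpr ha)) hbz'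
  exact this hz.symm

lemma exists_fixed_point (hVN : IsVirtuallyNilpotent H)
    (hinf : {x : ℂ | ∃ h ∈ H, sl h = x}.Infinite) :
    ∃ x0 : ℂ, ∀ h ∈ H, h x0 = x0 := by
  have hnt := no_translation H hVN hinf
  -- exists g0 with slope ≠ 1
  have hg0 : ∃ g0 ∈ H, sl g0 ≠ 1 := by
    by_contra hall
    push_neg at hall
    apply hinf
    apply Set.Finite.subset (Set.finite_singleton (1 : ℂ))
    rintro x ⟨h, hh, rfl⟩
    simp [hall h hh]
  obtain ⟨g0, hg0H, hg0⟩ := hg0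
  refine ⟨g0 0 / (1 - sl g0), ?_⟩
  set x0 : ℂ := g0 0 / (1 - sl g0) with hx0
  have hfix : g0 x0 = x0 := by
    rw [apply_eq, hx0]
    have : (1 : ℂ) - sl g0 ≠ 0 := sub_ne_zero.mpr (Ne.symm hg0)
    field_simp
    ring
  have huniq : ∀ y : ℂ, g0 y = y → y = x0 := by
    intro y hy
    rw [apply_eq] at hy
    have h1 : (1 - sl g0) * y = g0 0 := by linear_combination -hy
    rw [hx0, ← h1]
    have : (1 : ℂ) - sl g0 ≠ 0 := sub_ne_zero.mpr (Ne.symm hg0)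
    field_simp
  intro h hh
  have hw : h * g0 * h⁻¹ ∈ H := by
    exact H.mul_mem (H.mul_mem hh hg0H) (H.inv_mem hh)
  have hwsl : sl (h * g0 * h⁻¹) = sl g0 := by
    rw [sl_mul, sl_mul, sl_inv]
    have := sl_ne_zero h
    field_simp
  have h1 : sl ((h * g0 * h⁻¹) * g0⁻¹) = 1 := by
    rw [sl_mul, hwsl, sl_inv]
    exact mul_inv_cancel₀ (sl_ne_zero g0)
  have h2 : (h * g0 * h⁻¹) * g0⁻¹ = 1 :=
    hnt _ (H.mul_mem hw (H.inv_mem hg0H)) h1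
  have h3 : h * g0 = g0 * h := by
    have := mul_eq_one_iff_eq_inv.mp h2
    rw [inv_inv] at this
    calc h * g0 = (h * g0 * h⁻¹) * h := by group
      _ = g0 * h := by rw [this]
  have : g0 (h x0) = h x0 := by
    calc g0 (h x0) = (g0 * h) x0 := (mul_apply _ _ _).symm
      _ = (h * g0) x0 := by rw [h3]
      _ = h (g0 x0) := mul_apply _ _ _
      _ = h x0 := by rw [hfix]
  exact huniq _ this

end FixedPoint

/-- affine map x ↦ a x + b as an affine equivalence -/
noncomputable def aff (a : ℂˣ) (b : ℂ) : Aff :=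
  ((LinearEquiv.smulOfUnit a).toAffineEquiv).trans (AffineEquiv.constVAdd ℂ ℂ b)

lemma aff_apply (a : ℂˣ) (b : ℂ) (x : ℂ) : aff a b x = a * x + b := by
  simp [aff, LinearEquiv.smulOfUnit, Units.smul_def, smul_eq_mul]
  ring

lemma aff_zero (a : ℂˣ) (b : ℂ) : aff a b 0 = b := by simp [aff_apply]

lemma sl_aff (a : ℂˣ) (b : ℂ) : sl (aff a b) = a := by
  simp [sl, aff_apply]

lemma aff_mul (a a' : ℂˣ) (b b' : ℂ) :
    aff a b * aff a' b' = aff (a * a') ((a : ℂ) * b' + b) := by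
  apply aff_ext
  intro x
  rw [mul_apply, aff_apply, aff_apply, aff_apply]
  push_cast
  ring

lemma aff_one : aff 1 0 = 1 := by
  apply aff_ext
  intro x
  simp [aff_apply]

section Matrices

variable {d : ℕ}

abbrev Mat (d : ℕ) := Matrix (Fin d) (Fin d) ℂ

/-- upper triangular -/
def UTM (A : Mat d) : Prop := ∀ ⦃i j : Fin d⦄, j < i → A i j = 0

lemma UTM.one : UTM (1 : Mat d) := by
  intro i j hij
  exact Matrix.one_apply_ne (ne_of_gt hij)

lemma UTM.mul {A B : Mat d} (hA : UTM A) (hB : UTM B) : UTM (A * B) := by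
  intro i j hij
  rw [Matrix.mul_apply]
  apply Finset.sum_eq_zero
  intro l _
  rcases lt_or_ge l i with h | h
  · rw [hA h, zero_mul]
  · have : j < l := lt_of_lt_of_le hij h
    rw [hB this, mul_zero]

lemma mul_diag {A B : Mat d} (hA : UTM A) (hB : UTM B) (i : Fin d) :
    (A * B) i i = A i i * B i i := by
  rw [Matrix.mul_apply]
  rw [← Finset.sum_subset (Finset.subset_univ {i})]
  · rw [Finset.sum_singleton]
  · intro l _ hl
    simp only [Finset.mem_singleton] at hl
    rcases lt_or_gt_of_ne hl with h | h
    · rw [hA (show l < i from h), zero_mul]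
    · rw [hB (show i < l from h), mul_zero]

lemma mul_entry_cut {A B : Mat d} (hA : UTM A) (hB : UTM B) {i j : Fin d} (hij : i < j)
    (hcut : ∀ l : Fin d, i < l → l < j → A i l = 0 ∨ B l j = 0) :
    (A * B) i j = A i i * B i j + A i j * B j j := by
  rw [Matrix.mul_apply]
  rw [← Finset.sum_subset (Finset.subset_univ {i, j})]
  · rw [Finset.sum_pair (ne_of_lt hij)]
  · intro l _ hl
    simp only [Finset.mem_insert, Finset.mem_singleton] at hl
    push_neg at hl
    rcases lt_or_ge l i with h | h
    · rw [hA h, zero_mul]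
    · have h1 : i < l := lt_of_le_of_ne h (Ne.symm hl.1)
      rcases lt_or_ge l j with h2 | h2
      · rcases hcut l h1 h2 with hc | hc
        · rw [hc, zero_mul]
        · rw [hc, mul_zero]
      · have : j < l := lt_of_le_of_ne h2 (Ne.symm hl.2)
        rw [hB this, mul_zero]

lemma inv_UTM (g : GL (Fin d) ℂ) (hg : UTM (g : Mat d)) : UTM ((g⁻¹ : GL (Fin d) ℂ) : Mat d) := by
  haveI : Invertible (g : Mat d) := g.invertible
  have h1 : ((g⁻¹ : GL (Fin d) ℂ) : Mat d) = (g : Mat d)⁻¹ := Matrix.coe_units_inv g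
  rw [h1]
  exact Matrix.blockTriangular_inv_of_blockTriangular hg

lemma diag_inv_mul (g : GL (Fin d) ℂ) (hg : UTM (g : Mat d)) (i : Fin d) :
    (g : Mat d) i i * ((g⁻¹ : GL (Fin d) ℂ) : Mat d) i i = 1 := by
  have h1 : (g : Mat d) * ((g⁻¹ : GL (Fin d) ℂ) : Mat d) = 1 := by
    rw [← Units.val_mul, mul_inv_cancel, Units.val_one]
  have := mul_diag hg (inv_UTM g hg) i
  rw [h1] at this
  rw [← this, Matrix.one_apply_eq]

end Matrices

section Qm
variable {i j : Fin d}

/-- elementary unipotent matrix -/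
def qm (i j : Fin d) (t : ℂ) : Mat d := 1 + Matrix.single i j t

lemma qm_mul_qm (hij : i ≠ j) (t : ℂ) : qm i j t * qm i j (-t) = 1 := by
  unfold qm
  have e1 : Matrix.single i j t * Matrix.single i j (-t) = 0 :=
    Matrix.single_mul_single_of_ne t i j i (Ne.symm hij) (-t)
  have e2 : Matrix.single i j t + Matrix.single i j (-t) = 0 := by
    rw [← Matrix.single_add]
    norm_num
  calc (1 + Matrix.single i j t) * (1 + Matrix.single i j (-t))
      = 1 + (Matrix.single i j t + Matrix.single i j (-t)) +
        Matrix.single i j t * Matrix.single i j (-t) := by noncomm_ring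
    _ = 1 := by rw [e1, e2, add_zero, add_zero]

lemma qm_UTM (hij : i < j) (t : ℂ) : UTM (qm i j t) := by
  intro r c hrc
  unfold qm
  rw [Matrix.add_apply, Matrix.one_apply_ne (ne_of_gt hrc)]
  rw [Matrix.single, Matrix.of_apply, if_neg, add_zero]
  rintro ⟨rfl, rfl⟩
  exact absurd hij (not_lt_of_gt hrc)

/-- the elementary matrix as an element of `GL` -/
def QU (hij : i ≠ j) (t : ℂ) : GL (Fin d) ℂ :=
  ⟨qm i j t, qm i j (-t), qm_mul_qm hij t, by
    have := qm_mul_qm hij (-t)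
    rwa [neg_neg] at this⟩

lemma QU_val (hij : i ≠ j) (t : ℂ) : ((QU hij t : GL (Fin d) ℂ) : Mat d) = qm i j t := rfl

lemma QU_inv_val (hij : i ≠ j) (t : ℂ) :
    (((QU hij t)⁻¹ : GL (Fin d) ℂ) : Mat d) = qm i j (-t) := rfl

lemma conj_left_apply (t : ℂ) (M : Mat d) (c : Fin d) :
    (qm i j t * M) i c = M i c + t * M j c := by
  unfold qm
  rw [Matrix.add_mul, Matrix.one_mul, Matrix.add_apply,
    Matrix.single_mul_apply_same]

lemma conj_left_apply_ne {r : Fin d} (hr : r ≠ i) (t : ℂ) (M : Mat d) (c : Fin d) :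
    (qm i j t * M) r c = M r c := by
  unfold qm
  rw [Matrix.add_mul, Matrix.one_mul, Matrix.add_apply]
  rw [Matrix.single_mul_apply_of_ne t i j r c hr M, add_zero]

lemma conj_right_apply (t : ℂ) (M : Mat d) (r : Fin d) :
    (M * qm i j t) r j = M r j + M r i * t := by
  unfold qm
  rw [Matrix.mul_add, Matrix.mul_one, Matrix.add_apply,
    Matrix.mul_single_apply_same]

lemma conj_right_apply_ne {c : Fin d} (hc : c ≠ j) (t : ℂ) (M : Mat d) (r : Fin d) :
    (M * qm i j t) r c = M r c := by
  unfold qm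
  rw [Matrix.mul_add, Matrix.mul_one, Matrix.add_apply]
  rw [Matrix.mul_single_apply_of_ne t i j r c hc M, add_zero]

/-- conjugation changes the `(i,j)` entry in a controlled way -/
lemma conj_entry_same (hij : i < j) (t : ℂ) {M : Mat d} (hM : UTM M) :
    (qm i j t * M * qm i j (-t)) i j = M i j + t * M j j - t * M i i := by
  rw [conj_right_apply, conj_left_apply, conj_left_apply]
  rw [hM hij]
  ring

/-- conjugation preserves entries of width at most that of `(i,j)` -/
lemma conj_entry_pres (hij : i < j) (t : ℂ) {M : Mat d} (hM : UTM M)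
    {r c : Fin d} (hrc : r < c) (hw : (c : ℕ) - (r : ℕ) ≤ (j : ℕ) - (i : ℕ))
    (hne : ¬(r = i ∧ c = j)) :
    (qm i j t * M * qm i j (-t)) r c = M r c := by
  by_cases hri : r = i
  · subst hri
    have hcj : c ≠ j := fun hc => hne ⟨rfl, hc⟩
    have hcj' : (c : ℕ) < (j : ℕ) := by
      have h1 : (r : ℕ) < j := hij
      have h2 : (r : ℕ) < c := hrc
      have h3 : (c : ℕ) ≠ j := fun h => hcj (Fin.ext h)
      omega
    rw [conj_right_apply_ne hcj, conj_left_apply]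
    rw [hM (show c < j from hcj'), mul_zero, add_zero]
  · by_cases hcj : c = j
    · subst hcj
      rw [conj_right_apply, conj_left_apply_ne hri, conj_left_apply_ne hri]
      have hir : (i : ℕ) < (r : ℕ) := by
        have h1 : (i : ℕ) < c := hij
        have h2 : (r : ℕ) < c := hrc
        have h3 : (r : ℕ) ≠ i := fun h => hri (Fin.ext h)
        omega
      rw [hM (show i < r from hir), zero_mul, add_zero]
    · rw [conj_right_apply_ne hcj, conj_left_apply_ne hri]

end Qm

section Main

variable {d : ℕ} {Γ : Subgroup (GL (Fin d) ℂ)}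

/-- the matrix of an element of Γ -/
def mm (γ : Γ) : Mat d := ((γ : GL (Fin d) ℂ) : Mat d)

lemma mm_mul (γ δ : Γ) : mm (γ * δ) = mm γ * mm δ := by
  simp [mm, Units.val_mul]

lemma mm_one : mm (1 : Γ) = 1 := by simp [mm]

lemma mm_inv_mul (γ : Γ) : mm γ * mm γ⁻¹ = 1 := by
  rw [← mm_mul, mul_inv_cancel, mm_one]

lemma mm_mul_inv (γ : Γ) : mm γ⁻¹ * mm γ = 1 := by
  rw [← mm_mul, inv_mul_cancel, mm_one]

variable (hU : ∀ γ : Γ, UTM (mm γ))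

section withUT
include hU

lemma hUinv (γ : Γ) : UTM (mm γ⁻¹) := by
  have := inv_UTM (γ : GL (Fin d) ℂ) (hU γ)
  simpa [mm] using this

lemma mm_diag_mul (γ δ : Γ) (i : Fin d) : mm (γ * δ) i i = mm γ i i * mm δ i i := by
  rw [mm_mul]; exact mul_diag (hU γ) (hU δ) i

lemma mm_diag_inv (γ : Γ) (i : Fin d) : mm γ i i * mm γ⁻¹ i i = 1 := by
  have := diag_inv_mul (γ : GL (Fin d) ℂ) (hU γ) i
  simpa [mm] using this

/-- diagonal entry as a unit -/
def du (γ : Γ) (i : Fin d) : ℂˣ :=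
  ⟨mm γ i i, mm γ⁻¹ i i, mm_diag_inv hU γ i, by
    have := mm_diag_inv hU γ i; linear_combination this⟩

lemma du_val (γ : Γ) (i : Fin d) : (du hU γ i : ℂ) = mm γ i i := rfl

lemma du_mul (γ δ : Γ) (i : Fin d) : du hU (γ * δ) i = du hU γ i * du hU δ i := by
  ext
  rw [Units.val_mul, du_val, du_val, du_val, mm_diag_mul hU]

/-- the character χ_i / χ_j on Γ -/
def chr (i j : Fin d) : Γ →* ℂˣ where
  toFun := fun γ => du hU γ i * (du hU γ j)⁻¹
  map_one' := by
    show du hU (1 : Γ) i * (du hU (1 : Γ) j)⁻¹ = 1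
    have h1 : du hU (1 : Γ) i = 1 := by ext; simp [du_val, mm_one, Matrix.one_apply_eq]
    have h2 : du hU (1 : Γ) j = 1 := by ext; simp [du_val, mm_one, Matrix.one_apply_eq]
    rw [h1, h2]; simp
  map_mul' := by
    intro γ δ
    show du hU (γ * δ) i * (du hU (γ * δ) j)⁻¹ =
      du hU γ i * (du hU γ j)⁻¹ * (du hU δ i * (du hU δ j)⁻¹)
    rw [du_mul hU, du_mul hU]
    rw [mul_inv]
    exact mul_mul_mul_comm _ _ _ _

lemma chr_apply (i j : Fin d) (γ : Γ) :
    chr hU i j γ = du hU γ i * (du hU γ j)⁻¹ := rfl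

/-- character with infinite image -/
def InfChar (i j : Fin d) : Prop := (Set.range (chr hU i j)).Infinite

lemma chr_combine (i l j : Fin d) (γ : Γ) :
    chr hU i j γ = chr hU i l γ * chr hU l j γ := by
  simp only [chr_apply]
  group

lemma infChar_resolve {i l j : Fin d} (h : InfChar hU i j) (hil : ¬ InfChar hU i l) :
    InfChar hU l j := by
  intro hfin
  rw [InfChar, Set.not_infinite] at hil
  apply h
  apply Set.Finite.subset (Set.Finite.mul hil hfin)
  rintro x ⟨γ, rfl⟩
  rw [chr_combine hU i l j γ]
  exact Set.mul_mem_mul ⟨γ, rfl⟩ ⟨γ, rfl⟩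

end withUT

section Conj

/-- conjugated matrix of an element of `Γ` -/
def cm (P : GL (Fin d) ℂ) (γ : Γ) : Mat d :=
  ((P * (γ : GL (Fin d) ℂ) * P⁻¹ : GL (Fin d) ℂ) : Mat d)

lemma cm_eq (P : GL (Fin d) ℂ) (γ : Γ) :
    cm P γ = (P : Mat d) * mm γ * ((P⁻¹ : GL (Fin d) ℂ) : Mat d) := by
  simp [cm, mm, Units.val_mul]

lemma cm_mul (P : GL (Fin d) ℂ) (γ δ : Γ) : cm P (γ * δ) = cm P γ * cm P δ := by
  have h : (P * ((γ * δ : Γ) : GL (Fin d) ℂ) * P⁻¹)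
      = (P * (γ : GL (Fin d) ℂ) * P⁻¹) * (P * (δ : GL (Fin d) ℂ) * P⁻¹) := by
    rw [Subgroup.coe_mul]; group
  rw [cm, h, Units.val_mul]; rfl

lemma cm_one (P : GL (Fin d) ℂ) : cm P (1 : Γ) = 1 := by
  have h : (P * ((1 : Γ) : GL (Fin d) ℂ) * P⁻¹) = 1 := by
    rw [OneMemClass.coe_one]; group
  rw [cm, h, Units.val_one]

lemma cm_mul_inv (P : GL (Fin d) ℂ) (γ : Γ) : cm P γ * cm P γ⁻¹ = 1 := by
  rw [← cm_mul, mul_inv_cancel, cm_one]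

lemma cm_inv_mul (P : GL (Fin d) ℂ) (γ : Γ) : cm P γ⁻¹ * cm P γ = 1 := by
  rw [← cm_mul, inv_mul_cancel, cm_one]

include hU

lemma cm_UTM {P : GL (Fin d) ℂ} (hP : UTM (P : Mat d))
    (hP' : UTM ((P⁻¹ : GL (Fin d) ℂ) : Mat d)) (γ : Γ) : UTM (cm P γ) := by
  rw [cm_eq]
  exact UTM.mul (UTM.mul hP (hU γ)) hP'

lemma cm_diag {P : GL (Fin d) ℂ} (hP : UTM (P : Mat d))
    (hP' : UTM ((P⁻¹ : GL (Fin d) ℂ) : Mat d)) (γ : Γ) (i : Fin d) :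
    cm P γ i i = mm γ i i := by
  rw [cm_eq, mul_diag (UTM.mul hP (hU γ)) hP', mul_diag hP (hU γ)]
  linear_combination (mm γ i i) * (diag_inv_mul P hP i)

end Conj

/-- the entry `(i,j)` of the `P`-conjugate vanishes on all of `Γ` -/
abbrev Zero (Γ : Subgroup (GL (Fin d) ℂ)) (P : GL (Fin d) ℂ) (i j : Fin d) : Prop :=
  ∀ γ : Γ, cm P γ i j = 0

/-- the cocycle -/
def bco (P : GL (Fin d) ℂ) (i j : Fin d) (γ : Γ) : ℂ := cm P γ i j * mm γ⁻¹ j j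

section withUT2
include hU

lemma chr_val (i j : Fin d) (γ : Γ) :
    ((chr hU i j γ : ℂˣ) : ℂ) = mm γ i i * mm γ⁻¹ j j := rfl

lemma bco_cocycle {P : GL (Fin d) ℂ} (hP : UTM (P : Mat d))
    (hP' : UTM ((P⁻¹ : GL (Fin d) ℂ) : Mat d)) {i j : Fin d} (hij : i < j)
    (hcut : ∀ l : Fin d, i < l → l < j → Zero Γ P i l ∨ Zero Γ P l j) (γ δ : Γ) :
    bco P i j (γ * δ) = (chr hU i j γ : ℂ) * bco P i j δ + bco P i j γ := by
  have h1 : cm P (γ * δ) i j = cm P γ i i * cm P δ i j + cm P γ i j * cm P δ j j := by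
    rw [cm_mul]
    refine mul_entry_cut (cm_UTM hU hP hP' γ) (cm_UTM hU hP hP' δ) hij ?_
    intro l hl1 hl2
    rcases hcut l hl1 hl2 with h | h
    · exact Or.inl (h γ)
    · exact Or.inr (h δ)
  have h2 : mm (γ * δ)⁻¹ j j = mm δ⁻¹ j j * mm γ⁻¹ j j := by
    rw [mul_inv_rev]
    exact mm_diag_mul hU δ⁻¹ γ⁻¹ j
  unfold bco
  rw [h1, h2, chr_val hU, cm_diag hU hP hP' γ i, cm_diag hU hP hP' δ j]
  linear_combination (cm P γ i j * mm γ⁻¹ j j) * (mm_diag_inv hU δ j)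

/-- the affine representation attached to a pair with the cut property -/
noncomputable def rho {P : GL (Fin d) ℂ} (hP : UTM (P : Mat d))
    (hP' : UTM ((P⁻¹ : GL (Fin d) ℂ) : Mat d)) {i j : Fin d} (hij : i < j)
    (hcut : ∀ l : Fin d, i < l → l < j → Zero Γ P i l ∨ Zero Γ P l j) : Γ →* Aff where
  toFun γ := aff (chr hU i j γ) (bco P i j γ)
  map_one' := by
    have hb : bco P i j (1 : Γ) = 0 := by
      unfold bco
      rw [cm_one, Matrix.one_apply_ne (ne_of_lt hij), zero_mul]
    show aff (chr hU i j 1) (bco P i j 1) = 1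
    rw [map_one, hb, aff_one]
  map_mul' γ δ := by
    show aff (chr hU i j (γ * δ)) (bco P i j (γ * δ))
      = aff (chr hU i j γ) (bco P i j γ) * aff (chr hU i j δ) (bco P i j δ)
    rw [map_mul, aff_mul, bco_cocycle hU hP hP' hij hcut γ δ]

lemma rho_apply {P : GL (Fin d) ℂ} (hP : UTM (P : Mat d))
    (hP' : UTM ((P⁻¹ : GL (Fin d) ℂ) : Mat d)) {i j : Fin d} (hij : i < j)
    (hcut : ∀ l : Fin d, i < l → l < j → Zero Γ P i l ∨ Zero Γ P l j) (γ : Γ) :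
    rho hU hP hP' hij hcut γ = aff (chr hU i j γ) (bco P i j γ) := rfl

end withUT2

section Kill
include hU

lemma cm_conj {i j : Fin d} (hne : i ≠ j) (t : ℂ) (P : GL (Fin d) ℂ) (γ : Γ) :
    cm (QU hne t * P) γ = qm i j t * cm P γ * qm i j (-t) := by
  have h : (QU hne t * P) * (γ : GL (Fin d) ℂ) * (QU hne t * P)⁻¹
      = QU hne t * (P * (γ : GL (Fin d) ℂ) * P⁻¹) * (QU hne t)⁻¹ := by group
  rw [cm, h, Units.val_mul, Units.val_mul, QU_val, QU_inv_val]
  rfl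

lemma kill_step {P : GL (Fin d) ℂ} (hP : UTM (P : Mat d))
    (hP' : UTM ((P⁻¹ : GL (Fin d) ℂ) : Mat d)) {i j : Fin d} (hij : i < j)
    (hcut : ∀ l : Fin d, i < l → l < j → Zero Γ P i l ∨ Zero Γ P l j)
    (hinf : InfChar hU i j)
    (htame : ∀ ρ : Γ →* Aff, IsVirtuallyNilpotent ρ.range) :
    ∃ P' : GL (Fin d) ℂ, UTM (P' : Mat d) ∧ UTM ((P'⁻¹ : GL (Fin d) ℂ) : Mat d) ∧
      Zero Γ P' i j ∧
      (∀ r c : Fin d, r < c → (c : ℕ) - (r : ℕ) ≤ (j : ℕ) - (i : ℕ) →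
        ¬(r = i ∧ c = j) → Zero Γ P r c → Zero Γ P' r c) := by
  set ρ := rho hU hP hP' hij hcut with hρ
  have hVN := htame ρ
  have hinfsl : {x : ℂ | ∃ h ∈ ρ.range, sl h = x}.Infinite := by
    have h1 : ((fun u : ℂˣ => (u : ℂ)) '' Set.range (chr hU i j)).Infinite := by
      apply Set.Infinite.image ?_ hinf
      intro a _ b _ hab
      exact Units.ext hab
    apply Set.Infinite.mono ?_ h1
    rintro x ⟨u, ⟨γ, rfl⟩, rfl⟩
    refine ⟨ρ γ, ⟨γ, rfl⟩, ?_⟩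
    rw [hρ, rho_apply hU hP hP' hij hcut, sl_aff]
  obtain ⟨x0, hfix⟩ := exists_fixed_point ρ.range hVN hinfsl
  have hkey : ∀ γ : Γ, cm P γ i j + (-x0) * cm P γ j j - (-x0) * cm P γ i i = 0 := by
    intro γ
    have h1 : (ρ γ) x0 = x0 := hfix (ρ γ) ⟨γ, rfl⟩
    rw [hρ, rho_apply hU hP hP' hij hcut, aff_apply, chr_val hU] at h1
    unfold bco at h1
    rw [cm_diag hU hP hP' γ i, cm_diag hU hP hP' γ j]
    linear_combination (mm γ j j) * h1 +
      (-(cm P γ i j + x0 * mm γ i i)) * (mm_diag_inv hU γ j)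
  refine ⟨QU (ne_of_lt hij) (-x0) * P, ?_, ?_, ?_, ?_⟩
  · rw [Units.val_mul, QU_val]
    exact UTM.mul (qm_UTM hij _) hP
  · rw [mul_inv_rev, Units.val_mul, QU_inv_val]
    exact UTM.mul hP' (qm_UTM hij _)
  · intro γ
    rw [cm_conj hU (ne_of_lt hij) (-x0) P γ]
    rw [conj_entry_same hij (-x0) (cm_UTM hU hP hP' γ)]
    exact hkey γ
  · intro r c hrc hw hne hz γ
    rw [cm_conj hU (ne_of_lt hij) (-x0) P γ]
    rw [conj_entry_pres hij (-x0) (cm_UTM hU hP hP' γ) hrc hw hne]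
    exact hz γ

/-- all "infinite" pairs of width at most `w` are killed -/
abbrev GoodAll (P : GL (Fin d) ℂ) (w : ℕ) : Prop :=
  ∀ i j : Fin d, i < j → (j : ℕ) - (i : ℕ) ≤ w → InfChar hU i j → Zero Γ P i j

lemma widths (htame : ∀ ρ : Γ →* Aff, IsVirtuallyNilpotent ρ.range) (w : ℕ) :
    ∃ P : GL (Fin d) ℂ, UTM (P : Mat d) ∧ UTM ((P⁻¹ : GL (Fin d) ℂ) : Mat d) ∧
      GoodAll hU P w := by
  induction w with
  | zero =>
    refine ⟨1, ?_, ?_, ?_⟩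
    · rw [Units.val_one]; exact UTM.one
    · rw [inv_one, Units.val_one]; exact UTM.one
    · intro i j hij hw _
      have : (i : ℕ) < (j : ℕ) := hij
      omega
  | succ w ih =>
    obtain ⟨P, hP, hP', hG⟩ := ih
    have inner : ∀ n : ℕ, ∃ P' : GL (Fin d) ℂ, UTM (P' : Mat d) ∧
        UTM ((P'⁻¹ : GL (Fin d) ℂ) : Mat d) ∧ GoodAll hU P' w ∧
        (∀ i j : Fin d, i < j → (j : ℕ) - (i : ℕ) = w + 1 → (i : ℕ) < n →
          InfChar hU i j → Zero Γ P' i j) := by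
      intro n
      induction n with
      | zero => exact ⟨P, hP, hP', hG, fun i j _ _ h _ => absurd h (Nat.not_lt_zero _)⟩
      | succ n ihn =>
        obtain ⟨P', hQ, hQ', hGw, hGn⟩ := ihn
        by_cases hd : n + (w + 1) < d
        · set i : Fin d := ⟨n, by omega⟩ with hi
          set j : Fin d := ⟨n + (w + 1), hd⟩ with hj
          have hij : i < j := by
            rw [Fin.lt_def]; simp [hi, hj]
          by_cases hic : InfChar hU i j
          · have hcut : ∀ l : Fin d, i < l → l < j → Zero Γ P' i l ∨ Zero Γ P' l j := by
              intro l h1 h2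
              have hv1 : (i : ℕ) < (l : ℕ) := h1
              have hv2 : (l : ℕ) < (j : ℕ) := h2
              have hjv : (j : ℕ) = n + (w + 1) := rfl
              have hiv : (i : ℕ) = n := rfl
              by_cases hil : InfChar hU i l
              · exact Or.inl (hGw i l h1 (by omega) hil)
              · exact Or.inr (hGw l j h2 (by omega)
                  (infChar_resolve hU hic hil))
            obtain ⟨P'', h1, h2, h3, h4⟩ := kill_step hU hQ hQ' hij hcut hic htame
            have hjv : (j : ℕ) = n + (w + 1) := rfl
            have hiv : (i : ℕ) = n := rfl
            refine ⟨P'', h1, h2, ?_, ?_⟩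
            · intro r c hrc hw' hinf'
              have hv : (r : ℕ) < (c : ℕ) := hrc
              refine h4 r c hrc ?_ ?_ (hGw r c hrc hw' hinf')
              · omega
              · intro heq
                have he1 : (r : ℕ) = (i : ℕ) := by rw [heq.1]
                have he2 : (c : ℕ) = (j : ℕ) := by rw [heq.2]
                omega
            · intro r c hrc hwid hn hinf'
              have hv : (r : ℕ) < (c : ℕ) := hrc
              rcases Nat.lt_or_ge (r : ℕ) n with h | h
              · refine h4 r c hrc ?_ ?_ (hGn r c hrc hwid h hinf')
                · omega
                · intro heq
                  have he1 : (r : ℕ) = (i : ℕ) := by rw [heq.1]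
                  omega
              · have hr : (r : ℕ) = n := by omega
                have hc : (c : ℕ) = n + (w + 1) := by
                  have : (r : ℕ) < (c : ℕ) := hrc
                  omega
                have hrr : r = i := Fin.ext hr
                have hcc : c = j := Fin.ext hc
                rw [hrr, hcc]
                exact h3
          · refine ⟨P', hQ, hQ', hGw, ?_⟩
            intro r c hrc hwid hn hinf'
            rcases Nat.lt_or_ge (r : ℕ) n with h | h
            · exact hGn r c hrc hwid h hinf'
            · have hr : (r : ℕ) = n := by omega
              have hc : (c : ℕ) = n + (w + 1) := by
                have : (r : ℕ) < (c : ℕ) := hrc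
                omega
              have h1 : r = i := Fin.ext hr
              have h2 : c = j := Fin.ext hc
              rw [h1, h2] at hinf'
              exact absurd hinf' hic
        · refine ⟨P', hQ, hQ', hGw, ?_⟩
          intro r c hrc hwid hn hinf'
          rcases Nat.lt_or_ge (r : ℕ) n with h | h
          · exact hGn r c hrc hwid h hinf'
          · exfalso
            have hr : (r : ℕ) = n := by omega
            have hx1 : (r : ℕ) < (c : ℕ) := hrc
            have hx2 : (c : ℕ) < d := c.isLt
            omega
    obtain ⟨P', h1, h2, h3, h4⟩ := inner d
    refine ⟨P', h1, h2, ?_⟩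
    intro i j hij hwid hinf'
    rcases Nat.lt_or_ge ((j : ℕ) - (i : ℕ)) (w + 1) with h | h
    · exact h3 i j hij (by omega) hinf'
    · exact h4 i j hij (by omega) i.isLt hinf'

end Kill

section Final
include hU

/-- the pair has finite character range -/
def FinC (i j : Fin d) : Prop := (Set.range (chr hU i j)).Finite

lemma finC_trans {i l j : Fin d} (h1 : FinC hU i l) (h2 : FinC hU l j) : FinC hU i j := by
  apply Set.Finite.subset (Set.Finite.mul h1 h2)
  rintro x ⟨γ, rfl⟩
  rw [chr_combine hU i l j γ]
  exact Set.mul_mem_mul ⟨γ, rfl⟩ ⟨γ, rfl⟩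

/-- entries of conjugates are supported on the diagonal and on finite pairs -/
def AP (A : Mat d) : Prop := ∀ r c : Fin d, A r c ≠ 0 → r = c ∨ (r < c ∧ FinC hU r c)

/-- strictly upper, finite pairs, gap at least `k` -/
def Iprop (k : ℕ) (A : Mat d) : Prop :=
  ∀ r c : Fin d, A r c ≠ 0 → r < c ∧ FinC hU r c ∧ k ≤ (c : ℕ) - (r : ℕ)

lemma Iprop_add {k : ℕ} {A B : Mat d} (hA : Iprop hU k A) (hB : Iprop hU k B) :
    Iprop hU k (A + B) := by
  intro r c h
  rw [Matrix.add_apply] at h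
  by_cases h1 : A r c = 0
  · exact hB r c (by rw [h1, zero_add] at h; exact h)
  · exact hA r c h1

lemma Iprop_neg {k : ℕ} {A : Mat d} (hA : Iprop hU k A) : Iprop hU k (-A) := by
  intro r c h
  rw [Matrix.neg_apply, neg_ne_zero] at h
  exact hA r c h

lemma Iprop_sub {k : ℕ} {A B : Mat d} (hA : Iprop hU k A) (hB : Iprop hU k B) :
    Iprop hU k (A - B) := by
  rw [sub_eq_add_neg]
  exact Iprop_add hU hA (Iprop_neg hU hB)

lemma Iprop_mul_gap {k m : ℕ} {A B : Mat d} (hA : Iprop hU k A) (hB : Iprop hU m B) :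
    Iprop hU (k + m) (A * B) := by
  intro r c h
  rw [Matrix.mul_apply] at h
  obtain ⟨l, _, hl⟩ := Finset.exists_ne_zero_of_sum_ne_zero h
  have h1 : A r l ≠ 0 := fun hz => hl (by rw [hz, zero_mul])
  have h2 : B l c ≠ 0 := fun hz => hl (by rw [hz, mul_zero])
  obtain ⟨hrl, hf1, hg1⟩ := hA r l h1
  obtain ⟨hlc, hf2, hg2⟩ := hB l c h2
  have hv1 : (r : ℕ) < l := hrl
  have hv2 : (l : ℕ) < c := hlc
  exact ⟨lt_trans hrl hlc, finC_trans hU hf1 hf2, by omega⟩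

lemma Iprop_mul_AP {k : ℕ} {A B : Mat d} (hA : Iprop hU k A) (hB : AP hU B) :
    Iprop hU k (A * B) := by
  intro r c h
  rw [Matrix.mul_apply] at h
  obtain ⟨l, _, hl⟩ := Finset.exists_ne_zero_of_sum_ne_zero h
  have h1 : A r l ≠ 0 := fun hz => hl (by rw [hz, zero_mul])
  have h2 : B l c ≠ 0 := fun hz => hl (by rw [hz, mul_zero])
  obtain ⟨hrl, hf1, hg1⟩ := hA r l h1
  rcases hB l c h2 with hlc | ⟨hlc, hf2⟩
  · subst hlc
    exact ⟨hrl, hf1, hg1⟩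
  · have hv1 : (r : ℕ) < l := hrl
    have hv2 : (l : ℕ) < c := hlc
    exact ⟨lt_trans hrl hlc, finC_trans hU hf1 hf2, by omega⟩

lemma AP_mul_Iprop {k : ℕ} {A B : Mat d} (hA : AP hU A) (hB : Iprop hU k B) :
    Iprop hU k (A * B) := by
  intro r c h
  rw [Matrix.mul_apply] at h
  obtain ⟨l, _, hl⟩ := Finset.exists_ne_zero_of_sum_ne_zero h
  have h1 : A r l ≠ 0 := fun hz => hl (by rw [hz, zero_mul])
  have h2 : B l c ≠ 0 := fun hz => hl (by rw [hz, mul_zero])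
  obtain ⟨hlc, hf2, hg2⟩ := hB l c h2
  rcases hA r l h1 with hrl | ⟨hrl, hf1⟩
  · subst hrl
    exact ⟨hlc, hf2, hg2⟩
  · have hv1 : (r : ℕ) < l := hrl
    have hv2 : (l : ℕ) < c := hlc
    exact ⟨lt_trans hrl hlc, finC_trans hU hf1 hf2, by omega⟩

variable {P : GL (Fin d) ℂ}

lemma cm_AP (hP : UTM (P : Mat d)) (hP' : UTM ((P⁻¹ : GL (Fin d) ℂ) : Mat d))
    (hkill : GoodAll hU P d) (γ : Γ) : AP hU (cm P γ) := by
  intro r c h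
  rcases lt_trichotomy r c with h1 | h1 | h1
  · refine Or.inr ⟨h1, ?_⟩
    by_contra hfin
    have hinf : InfChar hU r c := hfin
    have hv : (c : ℕ) < d := c.isLt
    have hv2 : (r : ℕ) < (c : ℕ) := h1
    exact h (hkill r c h1 (by omega) hinf γ)
  · exact Or.inl h1
  · exact absurd (cm_UTM hU hP hP' γ h1) h

/-- the key matrix commutator estimate -/
lemma matrix_comm {k : ℕ} {M N M' N' : Mat d} (hMM' : M * M' = 1) (hNN' : N * N' = 1)
    (hcomm : (M - 1) * Matrix.diagonal (fun r => N r r)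
      = Matrix.diagonal (fun r => N r r) * (M - 1))
    (hB : Iprop hU 1 (N - Matrix.diagonal (fun r => N r r)))
    (hA : Iprop hU k (M - 1)) (hAP : AP hU (M' * N')) :
    Iprop hU (k + 1) (M * N * M' * N' - 1) := by
  set D : Mat d := Matrix.diagonal (fun r => N r r) with hD
  set A : Mat d := M - 1 with hA'
  set B : Mat d := N - D with hB'
  have step1 : A * N - N * A = A * B - B * A := by
    have hsplit : N = D + B := by rw [hB', add_comm, sub_add_cancel]
    rw [hsplit, mul_add, add_mul, ← hD] at *
    rw [hcomm]
    abel
  have step2 : M * N - N * M = A * N - N * A := by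
    rw [hA']
    noncomm_ring
  have step3 : M * N * M' * N' - 1 = (M * N - N * M) * (M' * N') := by
    have h4 : N * M * (M' * N') = 1 := by
      have e : N * M * (M' * N') = N * (M * M') * N' := by noncomm_ring
      rw [e, hMM', mul_one, hNN']
    rw [sub_mul, h4]
    congr 1
    noncomm_ring
  rw [step3, step2, step1]
  apply Iprop_mul_AP hU ?_ hAP
  apply Iprop_sub hU
  · exact Iprop_mul_gap hU hA hB
  · have := Iprop_mul_gap hU hB hA
    rwa [Nat.add_comm] at this

open Classical in
/-- intersection of kernels of the finite characters -/
noncomputable def Gamma0 : Subgroup Γ :=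
  ⨅ p : Fin d × Fin d, if (Set.range (chr hU p.1 p.2)).Finite
    then (chr hU p.1 p.2).ker else ⊤

lemma Gamma0_finiteIndex : (Gamma0 hU).FiniteIndex := by
  apply Subgroup.finiteIndex_iInf
  intro p
  split_ifs with h
  · have h2 : ((chr hU p.1 p.2).range : Set ℂˣ).Finite := by
      rwa [MonoidHom.coe_range]
    haveI : Finite ((chr hU p.1 p.2).range) := h2.to_subtype
    infer_instance
  · exact ⟨by simp [Subgroup.index_top]⟩

lemma Gamma0_diag {γ : Γ} (hγ : γ ∈ Gamma0 hU) {i j : Fin d} (h : FinC hU i j) :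
    mm γ i i = mm γ j j := by
  have h0 := Subgroup.mem_iInf.mp hγ (i, j)
  rw [if_pos (show (Set.range ⇑(chr hU ((i, j) : Fin d × Fin d).1 ((i, j) : Fin d × Fin d).2)).Finite from h)] at h0
  have h1 : chr hU i j γ = 1 := h0
  rw [chr_apply] at h1
  have h2 : du hU γ i = du hU γ j := by
    rwa [mul_inv_eq_one] at h1
  exact congrArg Units.val h2

/-- subgroups given by entry gaps -/
def Hgap (hP : UTM (P : Mat d)) (hP' : UTM ((P⁻¹ : GL (Fin d) ℂ) : Mat d))
    (hkill : GoodAll hU P d) (k : ℕ) : Subgroup ↥(Gamma0 hU) where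
  carrier := {x | Iprop hU k (cm P ((x : Γ)) - 1)}
  one_mem' := by
    show Iprop hU k (cm P ((1 : Γ)) - 1)
    rw [cm_one, sub_self]
    intro r c h
    simp at h
  mul_mem' {x y} hx hy := by
    show Iprop hU k (cm P ((x : Γ) * (y : Γ)) - 1)
    rw [cm_mul]
    have e : cm P (x : Γ) * cm P (y : Γ) - 1
        = (cm P (x : Γ) - 1) * cm P (y : Γ) + (cm P (y : Γ) - 1) := by
      noncomm_ring
    rw [e]
    exact Iprop_add hU (Iprop_mul_AP hU hx (cm_AP hU hP hP' hkill _)) hy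
  inv_mem' {x} hx := by
    show Iprop hU k (cm P ((x : Γ)⁻¹) - 1)
    have e : cm P (x : Γ)⁻¹ - 1 = -(cm P (x : Γ)⁻¹ * (cm P (x : Γ) - 1)) := by
      rw [mul_sub, mul_one, cm_inv_mul]
      noncomm_ring
    rw [e]
    exact Iprop_neg hU (AP_mul_Iprop hU (cm_AP hU hP hP' hkill _) hx)

lemma coe_commutator (x y : ↥(Gamma0 hU)) :
    ((⁅x, y⁆ : ↥(Gamma0 hU)) : Γ) = ⁅(x : Γ), (y : Γ)⁆ := by
  simp [commutatorElement_def]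

lemma cm_commutator (x y : Γ) :
    cm P ⁅x, y⁆ = cm P x * cm P y * cm P x⁻¹ * cm P y⁻¹ := by
  rw [commutatorElement_def, cm_mul, cm_mul, cm_mul]

lemma comm_base (hP : UTM (P : Mat d)) (hP' : UTM ((P⁻¹ : GL (Fin d) ℂ) : Mat d))
    (hkill : GoodAll hU P d) (γ δ : Γ) : Iprop hU 1 (cm P ⁅γ, δ⁆ - 1) := by
  intro r c h
  rw [Matrix.sub_apply] at h
  by_cases hrc : r = c
  · subst hrc
    exfalso
    apply h
    rw [Matrix.one_apply_eq, sub_eq_zero]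
    rw [cm_diag hU hP hP' _ r]
    have e1 : mm ⁅γ, δ⁆ r r = mm γ r r * mm δ r r * mm γ⁻¹ r r * mm δ⁻¹ r r := by
      rw [commutatorElement_def, mm_diag_mul hU, mm_diag_mul hU, mm_diag_mul hU]
    rw [e1]
    linear_combination (mm δ r r * mm δ⁻¹ r r) * (mm_diag_inv hU γ r) + mm_diag_inv hU δ r
  · have hne : cm P ⁅γ, δ⁆ r c ≠ 0 := by
      intro hz
      apply h
      rw [hz, Matrix.one_apply_ne hrc, sub_zero]
    rcases cm_AP hU hP hP' hkill ⁅γ, δ⁆ r c hne with h1 | ⟨h1, h2⟩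
    · exact absurd h1 hrc
    · have : (r : ℕ) < c := h1
      exact ⟨h1, h2, by omega⟩

lemma comm_step (hP : UTM (P : Mat d)) (hP' : UTM ((P⁻¹ : GL (Fin d) ℂ) : Mat d))
    (hkill : GoodAll hU P d) {k : ℕ} (x y : ↥(Gamma0 hU)) (hx : Iprop hU k (cm P ((x : Γ)) - 1)) :
    Iprop hU (k + 1) (cm P ((⁅x, y⁆ : ↥(Gamma0 hU)) : Γ) - 1) := by
  rw [coe_commutator, cm_commutator]
  apply matrix_comm (hU := hU) (hMM' := cm_mul_inv P (x : Γ)) (hNN' := cm_mul_inv P (y : Γ))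
    (hA := hx)
  · ext r c
    rw [Matrix.mul_diagonal, Matrix.diagonal_mul]
    by_cases hz : (cm P ((x : Γ)) - 1) r c = 0
    · rw [hz, zero_mul, mul_zero]
    · obtain ⟨h1, h2, _⟩ := hx r c hz
      have e : cm P ((y : Γ)) r r = cm P ((y : Γ)) c c := by
        rw [cm_diag hU hP hP' _ r, cm_diag hU hP hP' _ c]
        exact Gamma0_diag hU y.2 h2
      rw [e, mul_comm]
  · intro r c hz
    by_cases hrc : r = c
    · subst hrc
      rw [Matrix.sub_apply, Matrix.diagonal_apply_eq, sub_self] at hz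
      exact absurd rfl hz
    · rw [Matrix.sub_apply, Matrix.diagonal_apply_ne _ hrc, sub_zero] at hz
      rcases cm_AP hU hP hP' hkill (y : Γ) r c hz with h1 | ⟨h1, h2⟩
      · exact absurd h1 hrc
      · have : (r : ℕ) < c := h1
        exact ⟨h1, h2, by omega⟩
  · rw [← cm_mul]
    exact cm_AP hU hP hP' hkill _
  exact hU

lemma Gamma0_nilpotent (hP : UTM (P : Mat d)) (hP' : UTM ((P⁻¹ : GL (Fin d) ℂ) : Mat d))
    (hkill : GoodAll hU P d) : Group.IsNilpotent ↥(Gamma0 hU) := by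
  apply nilpotent_iff_lowerCentralSeries.mpr
  refine ⟨d + 1, ?_⟩
  have hle : ∀ k : ℕ, (⊤ : Subgroup ↥(Gamma0 hU)).lowerCentralSeries (k + 1)
      ≤ Hgap hU hP hP' hkill (k + 1) := by
    intro k
    induction k with
    | zero =>
      rw [lowerCentralSeries_succ, lowerCentralSeries_zero]
      apply Subgroup.commutator_le.mpr
      intro a _ b _
      show Iprop hU 1 (cm P ((⁅a, b⁆ : ↥(Gamma0 hU)) : Γ) - 1)
      rw [coe_commutator]
      exact comm_base hU hP hP' hkill _ _
    | succ k ih =>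
      rw [lowerCentralSeries_succ]
      apply Subgroup.commutator_le.mpr
      intro a ha b _
      exact comm_step hU hP hP' hkill a b (ih ha)
  have hbot : Hgap hU hP hP' hkill (d + 1) ≤ ⊥ := by
    intro x hx
    have h0 : cm P ((x : Γ)) - 1 = 0 := by
      ext r c
      rw [Matrix.zero_apply]
      by_contra hc
      obtain ⟨h1, _, h3⟩ := hx r c hc
      have hv : (c : ℕ) < d := c.isLt
      have hv2 : (r : ℕ) < c := h1
      omega
    have h1 : cm P ((x : Γ)) = 1 := by
      have := sub_eq_zero.mp h0
      simpa using this
    have h2 : (P * (((x : Γ)) : GL (Fin d) ℂ) * P⁻¹) = 1 := by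
      apply Units.ext
      rw [Units.val_one]
      exact h1
    have h3 : (((x : Γ)) : GL (Fin d) ℂ) = 1 := by
      calc (((x : Γ)) : GL (Fin d) ℂ)
          = P⁻¹ * (P * (((x : Γ)) : GL (Fin d) ℂ) * P⁻¹) * P := by group
        _ = P⁻¹ * 1 * P := by rw [h2]
        _ = 1 := by group
    have h4 : (x : Γ) = 1 := Subtype.ext h3
    exact Subgroup.mem_bot.mpr (Subtype.ext h4)
  exact le_bot_iff.mp (le_trans (hle d) hbot)

lemma main_vn (htame : ∀ ρ : Γ →* Aff, IsVirtuallyNilpotent ρ.range) :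
    IsVirtuallyNilpotent Γ := by
  obtain ⟨P, hP, hP', hkill⟩ := widths hU htame d
  exact ⟨Gamma0 hU, Gamma0_nilpotent hU hP hP' hkill, Gamma0_finiteIndex hU⟩

end Final

end Main

end Stmt18


/-- If `Γ` is a subgroup of `Upp_d(ℂ)` (invertible upper-triangular matrices) which is not
virtually nilpotent, then there is a group homomorphism `ρ : Γ → Aff(ℂ)` whose image is not
virtually nilpotent. Here `Aff(ℂ)` is realized as the group of affine automorphisms of the
complex line. -/
theorem stmt18 (d : ℕ) (Γ : Subgroup (GL (Fin d) ℂ))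
    (hupp : ∀ g ∈ Γ, ∀ i j : Fin d, j < i →
      ((g : GL (Fin d) ℂ) : Matrix (Fin d) (Fin d) ℂ) i j = 0)
    (hnn : ¬ IsVirtuallyNilpotent Γ) :
    ∃ ρ : Γ →* (ℂ ≃ᵃ[ℂ] ℂ), ¬ IsVirtuallyNilpotent ρ.range := by
  by_contra hex
  push_neg at hex
  apply hnn
  have hU : ∀ γ : Γ, Stmt18.UTM (Stmt18.mm γ) := fun γ i j h => hupp ↑γ γ.2 i j h
  exact Stmt18.main_vn hU hex
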